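/- Let M = [[A_k, B],[C, D]] be a block matrix over a commutative domain, where A_k is a k×k block with det_k = det(A_k) ≠ 0 and adjugate A_k*. Then each (i,j) entry of the matrix A = det_k · D − C A_k* B equals the determinant of the (k+1)×(k+1) submatrix of M obtained by bordering A_k with the i-th row of C extended by D_{ij} and the j-th column of B, i.e., each entry of A is a surrounding minor of the block A_k. -/

import Mathlib

open Matrix

/-- each entry of `det(A_k)·D − C·A_k*·B` is a surrounding minor of
the block `A_k` of `M = [[A_k, B],[C, D]]`. -/
theorem surrounding_minors_matrix {k m nn : ℕ} {R : Type*} [CommRing R] [IsDomain R]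
    (Ak : Matrix (Fin k) (Fin k) R) (B : Matrix (Fin k) (Fin nn) R)
    (C : Matrix (Fin m) (Fin k) R) (D : Matrix (Fin m) (Fin nn) R)
    (hA : Ak.det ≠ 0) :
    ∀ (i : Fin m) (j : Fin nn),
      (Ak.det • D - C * Ak.adjugate * B) i j =
        (Matrix.fromBlocks Ak
          (Matrix.of fun p (_ : Fin 1) => B p j)
          (Matrix.of fun (_ : Fin 1) q => C i q)
          (Matrix.of fun (_ : Fin 1) (_ : Fin 1) => D i j)).det := by
  intro i j
  set K := FractionRing R
  have hf : Function.Injective (algebraMap R K) := IsFractionRing.injective R K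
  apply hf
  set f := algebraMap R K
  -- notation for mapped blocks
  set A' := Ak.map f with hA'
  set b' : Matrix (Fin k) (Fin 1) K := (Matrix.of fun p (_ : Fin 1) => B p j).map f
  set c' : Matrix (Fin 1) (Fin k) K := (Matrix.of fun (_ : Fin 1) q => C i q).map f
  set d' : Matrix (Fin 1) (Fin 1) K := (Matrix.of fun (_ : Fin 1) (_ : Fin 1) => D i j).map f
  have hdet : A'.det = f Ak.det := by simp [hA', ← RingHom.mapMatrix_apply, ← RingHom.map_det]
  have hdet0 : A'.det ≠ 0 := by
    rw [hdet]
    simpa using fun h => hA (hf (by simpa using h))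
  have : Invertible A' := A'.invertibleOfIsUnitDet (isUnit_iff_ne_zero.mpr hdet0)
  have hrhs : f ((Matrix.fromBlocks Ak
          (Matrix.of fun p (_ : Fin 1) => B p j)
          (Matrix.of fun (_ : Fin 1) q => C i q)
          (Matrix.of fun (_ : Fin 1) (_ : Fin 1) => D i j)).det)
      = (Matrix.fromBlocks A' b' c' d').det := by
    rw [show Matrix.fromBlocks A' b' c' d' = (Matrix.fromBlocks Ak
          (Matrix.of fun p (_ : Fin 1) => B p j)
          (Matrix.of fun (_ : Fin 1) q => C i q)
          (Matrix.of fun (_ : Fin 1) (_ : Fin 1) => D i j)).map f from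
        (Matrix.fromBlocks_map _ _ _ _ _).symm,
      ← RingHom.mapMatrix_apply, ← RingHom.map_det]
  rw [hrhs, Matrix.det_fromBlocks₁₁]
  have hinv : (⅟ A' : Matrix (Fin k) (Fin k) K) = A'⁻¹ := by
    rw [Matrix.invOf_eq_nonsing_inv]
  have hadj : A'.det • A'⁻¹ = A'.adjugate := by
    rw [Matrix.inv_def, smul_smul, Ring.inverse_eq_inv, mul_inv_cancel₀ hdet0, one_smul]
  have key : A'.det * (d' - c' * ⅟ A' * b') 0 0
      = A'.det * d' 0 0 - (c' * A'.adjugate * b') 0 0 := by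
    rw [hinv, Matrix.sub_apply, mul_sub]
    congr 1
    rw [← hadj]
    simp [Matrix.mul_apply, Finset.mul_sum, Finset.sum_mul, Matrix.smul_apply, smul_eq_mul]
    exact (Finset.mul_sum _ _ _).trans (Finset.sum_congr rfl fun _ _ => (mul_assoc _ _ _).symm)
  rw [Matrix.det_fin_one, key]
  have hc : c' * A'.adjugate * b' = ((Matrix.of fun (_ : Fin 1) q => C i q) *
      Ak.adjugate * (Matrix.of fun p (_ : Fin 1) => B p j)).map f := by
    rw [hA', ← RingHom.mapMatrix_apply, ← RingHom.map_adjugate, RingHom.mapMatrix_apply,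
      Matrix.map_mul, Matrix.map_mul]
  rw [hc, hdet]
  have hl : (Ak.det • D - C * Ak.adjugate * B) i j
      = Ak.det * D i j - (C * Ak.adjugate * B) i j := by
    simp [Matrix.sub_apply, Matrix.smul_apply, smul_eq_mul]
  rw [hl, f.map_sub, f.map_mul]
  have : (((Matrix.of fun (_ : Fin 1) q => C i q) * Ak.adjugate *
      (Matrix.of fun p (_ : Fin 1) => B p j)).map f) 0 0 = f ((C * Ak.adjugate * B) i j) := by
    simp [Matrix.mul_apply]
  rw [this]
  simp [d', Matrix.map_apply]
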